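/- Symmetrized weak formulation: for φ continuous with rapid decay and ψ of polynomial growth, ∫ B(φ)ψ dv = (1/2) ∫∫∫ (ψ(v') + ψ(v'*) − ψ(v) − ψ(v*)) φ(v)φ(v*) ((v−v*)·ω)₊ dv dv* dω. -/

import Mathlib

open MeasureTheory

/-- ℝ³ as a Euclidean space. -/
noncomputable abbrev E3 := EuclideanSpace ℝ (Fin 3)

/-- The unit sphere S² in ℝ³. -/
noncomputable abbrev Sph := Metric.sphere (0 : E3) 1

/-- The surface measure on the unit sphere S². -/
noncomputable def sphMeasure : Measure Sph := (volume : Measure E3).toSphere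

/-- Post-collisional velocity `v' = v − ((v − v*)·ω) ω`. -/
noncomputable def vPost (v vs ω : E3) : E3 := v - (inner ℝ (v - vs) ω : ℝ) • ω

/-- Post-collisional velocity `v'* = v* + ((v − v*)·ω) ω`. -/
noncomputable def vsPost (v vs ω : E3) : E3 := vs + (inner ℝ (v - vs) ω : ℝ) • ω

/-- The hard-sphere Boltzmann collision integral for a spatially homogeneous `φ`:
`B(φ)(v) = ∫_{ℝ³×S²} (φ(v')φ(v'*) − φ(v)φ(v*)) ((v−v*)·ω)₊ dv* dω`. -/
noncomputable def Bop (φ : E3 → ℝ) (v : E3) : ℝ :=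
  ∫ vs : E3, ∫ ω : Sph,
    (φ (vPost v vs ω) * φ (vsPost v vs ω) - φ v * φ vs)
      * max (inner ℝ (v - vs) (ω : E3) : ℝ) 0 ∂sphMeasure

/-- `φ` is continuous with rapid decay at infinity. -/
def RapidDecay (φ : E3 → ℝ) : Prop :=
  Continuous φ ∧ ∀ n : ℕ, ∃ C : ℝ, ∀ v : E3, ‖v‖ ^ n * |φ v| ≤ C

/-- `ψ` is continuous with at most polynomial growth at infinity. -/
def PolyGrowth (ψ : E3 → ℝ) : Prop :=
  Continuous ψ ∧ ∃ C : ℝ, ∃ k : ℕ, ∀ v : E3, |ψ v| ≤ C * (1 + ‖v‖) ^ k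

open scoped RealInnerProductSpace Pointwise

namespace Boltz

instance : IsFiniteMeasure sphMeasure := by unfold sphMeasure; infer_instance

abbrev Q := (E3 × E3) × Sph

noncomputable def nu : Measure Q := ((volume : Measure E3).prod volume).prod sphMeasure

/-- collision map on pairs, as a linear map. -/
noncomputable def collL (ω : E3) : (E3 × E3) →ₗ[ℝ] (E3 × E3) where
  toFun q := (q.2 + (inner ℝ (q.1 - q.2) ω : ℝ) • ω, q.1 - (inner ℝ (q.1 - q.2) ω : ℝ) • ω)
  map_add' p q := by
    simp only [Prod.fst_add, Prod.snd_add, Prod.mk_add_mk, Prod.mk.injEq]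
    constructor <;>
    · rw [show p.1 + q.1 - (p.2 + q.2) = (p.1 - p.2) + (q.1 - q.2) by abel, inner_add_left]
      module
  map_smul' c p := by
    simp only [Prod.smul_fst, Prod.smul_snd, Prod.smul_mk, RingHom.id_apply, Prod.mk.injEq]
    constructor <;>
    · rw [show c • p.1 - c • p.2 = c • (p.1 - p.2) by module, real_inner_smul_left]
      module

lemma collL_invol (ω : E3) (hω : ‖ω‖ = 1) (q : E3 × E3) : collL ω (collL ω q) = q := by
  have h : (inner ℝ ω ω : ℝ) = 1 := by
    rw [real_inner_self_eq_norm_mul_norm, hω]; ring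
  simp only [collL, LinearMap.coe_mk, AddHom.coe_mk]
  set c : ℝ := (inner ℝ (q.1 - q.2) ω : ℝ) with hc
  have key : (inner ℝ (q.2 + c • ω - (q.1 - c • ω)) ω : ℝ) = c := by
    rw [show q.2 + c • ω - (q.1 - c • ω) = (2*c) • ω - (q.1 - q.2) by module,
        inner_sub_left, real_inner_smul_left, h, ← hc]
    ring
  rw [key]
  exact Prod.ext (by module) (by module)

instance : ((volume : Measure E3).prod (volume : Measure E3)).IsAddHaarMeasure :=
  Measure.prod.instIsAddHaarMeasure _ _

lemma measurePreserving_collL (ω : E3) (hω : ‖ω‖ = 1) :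
    MeasurePreserving (collL ω) ((volume : Measure E3).prod volume)
      ((volume : Measure E3).prod volume) := by
  have hcomp : (collL ω).comp (collL ω) = LinearMap.id := LinearMap.ext (collL_invol ω hω)
  have hdet : LinearMap.det (collL ω) * LinearMap.det (collL ω) = 1 := by
    rw [← LinearMap.det_comp, hcomp, LinearMap.det_id]
  have habs : |(LinearMap.det (collL ω))⁻¹| = 1 := by
    rcases mul_self_eq_one_iff.1 hdet with h | h <;> rw [h] <;> norm_num
  have hne : LinearMap.det (collL ω) ≠ 0 := by
    intro h; rw [h] at hdet; simp at hdet
  refine ⟨(LinearMap.continuous_of_finiteDimensional _).measurable, ?_⟩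
  rw [Measure.map_linearMap_addHaar_eq_smul_addHaar _ hne, habs]
  simp

lemma continuous_negSph : Continuous (fun ω : Sph => -ω) := by
  exact Continuous.subtype_mk (continuous_neg.comp continuous_subtype_val) _

lemma measurePreserving_negSph :
    MeasurePreserving (fun ω : Sph => -ω) sphMeasure sphMeasure := by
  refine ⟨continuous_negSph.measurable, ?_⟩
  refine Measure.ext fun s hs => ?_
  rw [Measure.map_apply continuous_negSph.measurable hs]
  unfold sphMeasure
  rw [Measure.toSphere_apply' _ (continuous_negSph.measurable hs),
      Measure.toSphere_apply' _ hs]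
  congr 1
  have himg : (Subtype.val '' ((fun ω : Sph => -ω) ⁻¹' s)) = -(Subtype.val '' s) := by
    ext x
    constructor
    · rintro ⟨ω, hω, rfl⟩
      refine Set.mem_neg.2 ⟨-ω, hω, ?_⟩
      simp
    · intro hx
      obtain ⟨σ, hσ, hσx⟩ := Set.mem_neg.1 hx
      refine ⟨-σ, by simpa using hσ, ?_⟩
      rw [show ((-σ : Sph) : E3) = -(σ : E3) from rfl, hσx, neg_neg]
  rw [himg, Set.smul_neg, Measure.measure_neg]

lemma sph_norm (ω : Sph) : ‖(ω : E3)‖ = 1 := by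
  have := ω.2
  rwa [mem_sphere_zero_iff_norm] at this

lemma sph_inner_self (ω : Sph) : (inner ℝ (ω : E3) (ω : E3) : ℝ) = 1 := by
  rw [real_inner_self_eq_norm_mul_norm, sph_norm]; ring

/-- the collision transformation on `Q`. -/
noncomputable def Tfun : Q → Q := fun z => (collL (z.2 : E3) z.1, z.2)

/-- the swap-and-antipode transformation on `Q`. -/
noncomputable def Sfun : Q → Q := fun z => ((z.1.2, z.1.1), -z.2)

lemma continuous_inner_pair :
    Continuous (fun z : Q => (inner ℝ (z.1.1 - z.1.2) (z.2 : E3) : ℝ)) := by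
  exact Continuous.inner ((continuous_fst.fst).sub (continuous_fst.snd))
    (continuous_subtype_val.comp continuous_snd)

lemma continuous_Tfun : Continuous Tfun := by
  unfold Tfun
  refine Continuous.prodMk ?_ continuous_snd
  have h1 : ∀ z : Q, collL (z.2 : E3) z.1
      = (z.1.2 + (inner ℝ (z.1.1 - z.1.2) (z.2 : E3) : ℝ) • (z.2 : E3),
         z.1.1 - (inner ℝ (z.1.1 - z.1.2) (z.2 : E3) : ℝ) • (z.2 : E3)) := fun z => rfl
  simp only [h1]
  have hω : Continuous (fun z : Q => (z.2 : E3)) := continuous_subtype_val.comp continuous_snd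
  exact Continuous.prodMk
    ((continuous_fst.snd).add (continuous_inner_pair.smul hω))
    ((continuous_fst.fst).sub (continuous_inner_pair.smul hω))

lemma continuous_Sfun : Continuous Sfun := by
  unfold Sfun
  exact Continuous.prodMk (Continuous.prodMk continuous_fst.snd continuous_fst.fst)
    (continuous_negSph.comp continuous_snd)

lemma Tfun_invol : Function.Involutive Tfun := by
  intro z
  unfold Tfun
  simp only
  rw [collL_invol _ (sph_norm z.2)]

lemma Sfun_invol : Function.Involutive Sfun := by
  intro z
  unfold Sfun
  simp

noncomputable def Thomeo : Q ≃ₜ Q :=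
  { toEquiv := Tfun_invol.toPerm _
    continuous_toFun := continuous_Tfun
    continuous_invFun := continuous_Tfun }

noncomputable def Shomeo : Q ≃ₜ Q :=
  { toEquiv := Sfun_invol.toPerm _
    continuous_toFun := continuous_Sfun
    continuous_invFun := continuous_Sfun }

lemma Temb : MeasurableEmbedding Tfun := Thomeo.measurableEmbedding

lemma Semb : MeasurableEmbedding Sfun := Shomeo.measurableEmbedding

lemma mpT : MeasurePreserving Tfun nu nu := by
  have hgm : Measurable (Function.uncurry fun (ω : Sph) (q : E3 × E3) => collL (ω : E3) q) := by
    have : Continuous (fun p : Sph × (E3 × E3) => collL (p.1 : E3) p.2) := by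
      have h1 : ∀ p : Sph × (E3 × E3), collL (p.1 : E3) p.2
          = (p.2.2 + (inner ℝ (p.2.1 - p.2.2) (p.1 : E3) : ℝ) • (p.1 : E3),
             p.2.1 - (inner ℝ (p.2.1 - p.2.2) (p.1 : E3) : ℝ) • (p.1 : E3)) := fun p => rfl
      simp only [h1]
      have hω : Continuous (fun p : Sph × (E3 × E3) => (p.1 : E3)) :=
        continuous_subtype_val.comp continuous_fst
      have hin : Continuous (fun p : Sph × (E3 × E3) =>
          (inner ℝ (p.2.1 - p.2.2) (p.1 : E3) : ℝ)) :=
        Continuous.inner ((continuous_snd.fst).sub (continuous_snd.snd)) hω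
      exact Continuous.prodMk ((continuous_snd.snd).add (hin.smul hω))
        ((continuous_snd.fst).sub (hin.smul hω))
    exact this.measurable
  have hskew : MeasurePreserving
      (fun p : Sph × (E3 × E3) => (p.1, collL (p.1 : E3) p.2))
      (sphMeasure.prod ((volume : Measure E3).prod volume))
      (sphMeasure.prod ((volume : Measure E3).prod volume)) :=
    (MeasurePreserving.id sphMeasure).skew_product hgm
      (Filter.Eventually.of_forall fun ω => (measurePreserving_collL _ (sph_norm ω)).map_eq)
  have h := (Measure.measurePreserving_swap).comp (hskew.comp (Measure.measurePreserving_swap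
    (μ := (volume : Measure E3).prod volume) (ν := sphMeasure)))
  exact h

lemma mpS : MeasurePreserving Sfun nu nu := by
  have h := (Measure.measurePreserving_swap (μ := (volume : Measure E3)) (ν := (volume : Measure E3))).prod
    measurePreserving_negSph
  exact h

/- geometry: pointwise identities -/

lemma coll_eq (a b : E3) (ω : Sph) :
    collL (ω : E3) (a, b) = (vsPost a b ω, vPost a b ω) := rfl

lemma inner_coll (a b : E3) (ω : Sph) :
    (inner ℝ (vsPost a b ω - vPost a b ω) (ω : E3) : ℝ) = (inner ℝ (a - b) (ω : E3) : ℝ) := by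
  unfold vPost vsPost
  rw [show b + (inner ℝ (a - b) (ω:E3) : ℝ) • (ω:E3) - (a - (inner ℝ (a - b) (ω:E3) : ℝ) • (ω:E3))
      = (2 * (inner ℝ (a - b) (ω:E3) : ℝ)) • (ω:E3) - (a - b) by module,
    inner_sub_left, real_inner_smul_left, sph_inner_self]
  ring

lemma vPost_coll (a b : E3) (ω : Sph) :
    vPost (vsPost a b ω) (vPost a b ω) ω = b := by
  have h := inner_coll a b ω
  unfold vPost vsPost at *
  rw [h]
  module

lemma vsPost_coll (a b : E3) (ω : Sph) :
    vsPost (vsPost a b ω) (vPost a b ω) ω = a := by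
  have h := inner_coll a b ω
  unfold vPost vsPost at *
  rw [h]
  module

lemma inner_negswap (a b : E3) (ω : Sph) :
    (inner ℝ (b - a) ((-ω : Sph) : E3) : ℝ) = (inner ℝ (a - b) (ω : E3) : ℝ) := by
  rw [show ((-ω : Sph) : E3) = -(ω : E3) from rfl]
  rw [inner_neg_right, ← inner_neg_left]
  congr 1
  module

lemma vPost_negswap (a b : E3) (ω : Sph) :
    vPost b a ((-ω : Sph) : E3) = vsPost a b ω := by
  unfold vPost vsPost
  rw [show ((-ω : Sph) : E3) = -(ω : E3) from rfl]
  rw [inner_neg_right, show b - a = -(a-b) by module, inner_neg_left]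
  module

lemma vsPost_negswap (a b : E3) (ω : Sph) :
    vsPost b a ((-ω : Sph) : E3) = vPost a b ω := by
  unfold vPost vsPost
  rw [show ((-ω : Sph) : E3) = -(ω : E3) from rfl]
  rw [inner_neg_right, show b - a = -(a-b) by module, inner_neg_left]
  module

lemma one_add_pow_le (x : ℝ) (hx : 0 ≤ x) (m : ℕ) : (1 + x) ^ m ≤ 2 ^ m * (1 + x ^ m) := by
  rcases le_total x 1 with h | h
  · calc (1 + x) ^ m ≤ 2 ^ m := by
          apply pow_le_pow_left₀ (by linarith) (by linarith)
    _ ≤ 2 ^ m * (1 + x ^ m) := by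
          nlinarith [pow_nonneg hx m, pow_pos (show (0:ℝ) < 2 by norm_num) m]
  · calc (1 + x) ^ m ≤ (2 * x) ^ m := by
          apply pow_le_pow_left₀ (by linarith) (by linarith)
    _ = 2 ^ m * x ^ m := mul_pow 2 x m
    _ ≤ 2 ^ m * (1 + x ^ m) := by
          nlinarith [pow_pos (show (0:ℝ) < 2 by norm_num) m, pow_nonneg hx m]

lemma rd_bound {φ : E3 → ℝ} (hφ : RapidDecay φ) (m : ℕ) :
    ∃ C : ℝ, 0 ≤ C ∧ ∀ v : E3, (1 + ‖v‖) ^ m * |φ v| ≤ C := by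
  obtain ⟨C0, hC0⟩ := hφ.2 0
  obtain ⟨Cm, hCm⟩ := hφ.2 m
  have hbd : ∀ v : E3, (1 + ‖v‖) ^ m * |φ v| ≤ 2 ^ m * (C0 + Cm) := by
    intro v
    calc (1 + ‖v‖) ^ m * |φ v| ≤ (2 ^ m * (1 + ‖v‖ ^ m)) * |φ v| := by
          apply mul_le_mul_of_nonneg_right (one_add_pow_le _ (norm_nonneg v) m) (abs_nonneg _)
    _ = 2 ^ m * (|φ v| + ‖v‖ ^ m * |φ v|) := by ring
    _ ≤ 2 ^ m * (C0 + Cm) := by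
          have h0 := hC0 v; have hm := hCm v
          simp only [pow_zero, one_mul] at h0
          have : (0:ℝ) < 2 ^ m := pow_pos (by norm_num) m
          nlinarith
  refine ⟨2 ^ m * (C0 + Cm), ?_, hbd⟩
  calc (0:ℝ) ≤ (1 + ‖(0:E3)‖) ^ m * |φ 0| := by positivity
  _ ≤ _ := hbd 0

lemma integrable_g {φ : E3 → ℝ} (hφ : RapidDecay φ) (m : ℕ) :
    Integrable (fun v : E3 => (1 + ‖v‖) ^ m * |φ v|) := by
  obtain ⟨C, hC0, hC⟩ := rd_bound hφ (m + 4)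
  have hfinrank : ((Module.finrank ℝ E3 : ℝ)) < 4 := by
    rw [finrank_euclideanSpace_fin]; norm_num
  have hint : Integrable (fun v : E3 => C * (1 + ‖v‖) ^ (-(4:ℝ))) :=
    (integrable_one_add_norm hfinrank).const_mul C
  refine hint.mono' ?_ (Filter.Eventually.of_forall fun v => ?_)
  · exact (((continuous_const.add continuous_norm).pow m).mul
      (hφ.1.abs)).aestronglyMeasurable
  · have h1 : (0:ℝ) < 1 + ‖v‖ := by positivity
    have hrw : (1 + ‖v‖) ^ (-(4:ℝ)) = ((1 + ‖v‖) ^ (4:ℕ))⁻¹ := by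
      rw [Real.rpow_neg h1.le, ← Real.rpow_natCast (1 + ‖v‖) 4]
      norm_num
    rw [Real.norm_eq_abs, abs_of_nonneg (by positivity), hrw,
      mul_comm C, ← div_eq_inv_mul, le_div_iff₀ (by positivity)]
    calc (1 + ‖v‖) ^ m * |φ v| * (1 + ‖v‖) ^ (4:ℕ)
        = (1 + ‖v‖) ^ (m + 4) * |φ v| := by ring
    _ ≤ C := hC v

/-- The kernel. -/
noncomputable def Kk (z : Q) : ℝ := max (inner ℝ (z.1.1 - z.1.2) ((z.2 : Sph) : E3) : ℝ) 0

lemma Kk_nonneg (z : Q) : 0 ≤ Kk z := le_max_right _ _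

lemma Kk_le (z : Q) : Kk z ≤ (1 + ‖z.1.1‖) * (1 + ‖z.1.2‖) := by
  have h1 : (inner ℝ (z.1.1 - z.1.2) ((z.2 : Sph) : E3) : ℝ) ≤ ‖z.1.1 - z.1.2‖ := by
    calc (inner ℝ (z.1.1 - z.1.2) ((z.2 : Sph) : E3) : ℝ)
        ≤ ‖z.1.1 - z.1.2‖ * ‖((z.2 : Sph) : E3)‖ := real_inner_le_norm _ _
    _ = ‖z.1.1 - z.1.2‖ := by rw [sph_norm]; ring
  have h2 : ‖z.1.1 - z.1.2‖ ≤ ‖z.1.1‖ + ‖z.1.2‖ := norm_sub_le _ _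
  have h3 := norm_nonneg z.1.1
  have h4 := norm_nonneg z.1.2
  rcases max_cases (inner ℝ (z.1.1 - z.1.2) ((z.2 : Sph) : E3) : ℝ) 0 with ⟨h, _⟩ | ⟨h, _⟩ <;>
    · unfold Kk; rw [h]; nlinarith

lemma integrable_master {φ ψ : E3 → ℝ} (hφ : RapidDecay φ) (hψc : Continuous ψ)
    {C : ℝ} {k : ℕ} (hCk : ∀ v : E3, |ψ v| ≤ C * (1 + ‖v‖) ^ k)
    (X : Q → E3) (hXc : Continuous X)
    (hXb : ∀ z : Q, ‖X z‖ ≤ 2 * (‖z.1.1‖ + ‖z.1.2‖)) :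
    Integrable (fun z : Q => ψ (X z) * (φ z.1.1 * φ z.1.2) * Kk z) nu := by
  have hC0 : 0 ≤ C := by
    have := hCk 0
    simp only [norm_zero, add_zero, one_pow, mul_one] at this
    exact (abs_nonneg _).trans this
  set g : E3 → ℝ := fun v => (1 + ‖v‖) ^ (k+1) * |φ v| with hg
  have hgint : Integrable g := integrable_g hφ (k+1)
  have hmeas : AEStronglyMeasurable (fun z : Q => ψ (X z) * (φ z.1.1 * φ z.1.2) * Kk z) nu := by
    have hKc : Continuous Kk := by
      unfold Kk
      exact continuous_inner_pair.max continuous_const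
    exact (((hψc.comp hXc).mul ((hφ.1.comp continuous_fst.fst).mul
      (hφ.1.comp continuous_fst.snd))).mul hKc).aestronglyMeasurable
  -- dominating function
  have hdom : Integrable (fun z : Q => (C * 2 ^ k) * (g z.1.1 * g z.1.2)) nu := by
    have h1 : Integrable (fun q : E3 × E3 => g q.1 * g q.2)
        ((volume : Measure E3).prod volume) := hgint.mul_prod hgint
    have h2 : Integrable (fun z : Q => (g z.1.1 * g z.1.2) * (fun _ : Sph => (1:ℝ)) z.2) nu :=
      h1.mul_prod (integrable_const 1)
    simp only [mul_one] at h2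
    exact h2.const_mul _
  refine hdom.mono' hmeas (Filter.Eventually.of_forall fun z => ?_)
  set a := ‖z.1.1‖ with ha
  set b := ‖z.1.2‖ with hb
  have ha0 : 0 ≤ a := norm_nonneg _
  have hb0 : 0 ≤ b := norm_nonneg _
  have h1 : |ψ (X z)| ≤ C * 2 ^ k * ((1 + a) ^ k * (1 + b) ^ k) := by
    calc |ψ (X z)| ≤ C * (1 + ‖X z‖) ^ k := hCk _
    _ ≤ C * (2 * ((1 + a) * (1 + b))) ^ k := by
        apply mul_le_mul_of_nonneg_left _ hC0
        apply pow_le_pow_left₀ (by positivity)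
        nlinarith [hXb z]
    _ = C * 2 ^ k * ((1 + a) ^ k * (1 + b) ^ k) := by rw [mul_pow, mul_pow]; ring
  have h2 : Kk z ≤ (1 + a) * (1 + b) := Kk_le z
  calc ‖ψ (X z) * (φ z.1.1 * φ z.1.2) * Kk z‖
      = |ψ (X z)| * (|φ z.1.1| * |φ z.1.2|) * Kk z := by
        rw [Real.norm_eq_abs, abs_mul, abs_mul, abs_mul, abs_of_nonneg (Kk_nonneg z)]
  _ ≤ (C * 2 ^ k * ((1 + a) ^ k * (1 + b) ^ k)) * (|φ z.1.1| * |φ z.1.2|)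
        * ((1 + a) * (1 + b)) := by
        apply mul_le_mul (mul_le_mul_of_nonneg_right h1 (by positivity)) h2 (Kk_nonneg z)
        positivity
  _ = (C * 2 ^ k) * (g z.1.1 * g z.1.2) := by
        rw [hg]; simp only []; ring

lemma iterToProd (f : E3 → E3 → Sph → ℝ)
    (hf : Integrable (fun z : Q => f z.1.1 z.1.2 z.2) nu) :
    (∫ v : E3, ∫ vs : E3, ∫ ω : Sph, f v vs ω ∂sphMeasure)
      = ∫ z : Q, f z.1.1 z.1.2 z.2 ∂nu := by
  have h1 : Integrable (Function.uncurry fun (q : E3 × E3) (ω : Sph) => f q.1 q.2 ω)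
      (((volume : Measure E3).prod volume).prod sphMeasure) := hf
  have h2 : Integrable (Function.uncurry fun (v vs : E3) => ∫ ω : Sph, f v vs ω ∂sphMeasure)
      ((volume : Measure E3).prod volume) := h1.integral_prod_left
  calc (∫ v : E3, ∫ vs : E3, ∫ ω : Sph, f v vs ω ∂sphMeasure)
      = ∫ q : E3 × E3, ∫ ω : Sph, f q.1 q.2 ω ∂sphMeasure
          ∂((volume : Measure E3).prod volume) := integral_integral h2
  _ = ∫ z : Q, f z.1.1 z.1.2 z.2 ∂nu := integral_integral h1

section Funs

variable (φ ψ : E3 → ℝ)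

noncomputable def C1f : Q → ℝ := fun z =>
  ψ (vPost z.1.1 z.1.2 z.2) * (φ z.1.1 * φ z.1.2) * Kk z
noncomputable def C2f : Q → ℝ := fun z =>
  ψ (vsPost z.1.1 z.1.2 z.2) * (φ z.1.1 * φ z.1.2) * Kk z
noncomputable def C3f : Q → ℝ := fun z =>
  ψ z.1.1 * (φ z.1.1 * φ z.1.2) * Kk z
noncomputable def C4f : Q → ℝ := fun z =>
  ψ z.1.2 * (φ z.1.1 * φ z.1.2) * Kk z
noncomputable def AAf : Q → ℝ := fun z =>
  ψ z.1.1 * (φ (vPost z.1.1 z.1.2 z.2) * φ (vsPost z.1.1 z.1.2 z.2)) * Kk z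

end Funs

lemma Kk_Tfun (z : Q) : Kk (Tfun z) = Kk z := by
  unfold Kk
  have h : (Tfun z).1.1 - (Tfun z).1.2
      = vsPost z.1.1 z.1.2 z.2 - vPost z.1.1 z.1.2 z.2 := rfl
  rw [show ((Tfun z).2 : E3) = (z.2 : E3) from rfl, h, inner_coll]

lemma Kk_Sfun (z : Q) : Kk (Sfun z) = Kk z := by
  unfold Kk
  have h : (Sfun z).1.1 - (Sfun z).1.2 = z.1.2 - z.1.1 := rfl
  rw [h, show ((Sfun z).2 : E3) = ((-z.2 : Sph) : E3) from rfl, inner_negswap]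

lemma compT (φ ψ : E3 → ℝ) : (fun z => C2f φ ψ (Tfun z)) = AAf φ ψ := by
  funext z
  unfold C2f AAf
  have h1 : (Tfun z).1.1 = vsPost z.1.1 z.1.2 z.2 := rfl
  have h2 : (Tfun z).1.2 = vPost z.1.1 z.1.2 z.2 := rfl
  have h3 : (Tfun z).2 = z.2 := rfl
  rw [Kk_Tfun, h1, h2, h3, vsPost_coll]
  ring

lemma compS12 (φ ψ : E3 → ℝ) : (fun z => C2f φ ψ (Sfun z)) = C1f φ ψ := by
  funext z
  unfold C2f C1f
  have h1 : (Sfun z).1.1 = z.1.2 := rfl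
  have h2 : (Sfun z).1.2 = z.1.1 := rfl
  have h3 : (Sfun z).2 = -z.2 := rfl
  rw [Kk_Sfun, h1, h2, h3, vsPost_negswap]
  ring

lemma compS34 (φ ψ : E3 → ℝ) : (fun z => C3f φ ψ (Sfun z)) = C4f φ ψ := by
  funext z
  unfold C3f C4f
  have h1 : (Sfun z).1.1 = z.1.2 := rfl
  have h2 : (Sfun z).1.2 = z.1.1 := rfl
  rw [Kk_Sfun, h1, h2]
  ring

/- continuity and bounds for the four X maps -/

lemma continuous_vPostQ : Continuous (fun z : Q => vPost z.1.1 z.1.2 (z.2 : E3)) := by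
  unfold vPost
  have hω : Continuous (fun z : Q => (z.2 : E3)) := continuous_subtype_val.comp continuous_snd
  exact (continuous_fst.fst).sub (continuous_inner_pair.smul hω)

lemma continuous_vsPostQ : Continuous (fun z : Q => vsPost z.1.1 z.1.2 (z.2 : E3)) := by
  unfold vsPost
  have hω : Continuous (fun z : Q => (z.2 : E3)) := continuous_subtype_val.comp continuous_snd
  exact (continuous_fst.snd).add (continuous_inner_pair.smul hω)

lemma vPost_bound (z : Q) :
    ‖vPost z.1.1 z.1.2 (z.2 : E3)‖ ≤ 2 * (‖z.1.1‖ + ‖z.1.2‖) := by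
  unfold vPost
  have h1 : |(inner ℝ (z.1.1 - z.1.2) ((z.2:Sph) : E3) : ℝ)| ≤ ‖z.1.1 - z.1.2‖ := by
    calc |(inner ℝ (z.1.1 - z.1.2) ((z.2:Sph) : E3) : ℝ)|
        ≤ ‖z.1.1 - z.1.2‖ * ‖((z.2:Sph) : E3)‖ := abs_real_inner_le_norm _ _
    _ = ‖z.1.1 - z.1.2‖ := by rw [sph_norm]; ring
  calc ‖z.1.1 - (inner ℝ (z.1.1 - z.1.2) ((z.2:Sph):E3) : ℝ) • ((z.2:Sph):E3)‖
      ≤ ‖z.1.1‖ + ‖(inner ℝ (z.1.1 - z.1.2) ((z.2:Sph):E3) : ℝ) • ((z.2:Sph):E3)‖ :=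
        norm_sub_le _ _
  _ = ‖z.1.1‖ + |(inner ℝ (z.1.1 - z.1.2) ((z.2:Sph):E3) : ℝ)| * ‖((z.2:Sph):E3)‖ := by
        rw [norm_smul, Real.norm_eq_abs]
  _ ≤ ‖z.1.1‖ + ‖z.1.1 - z.1.2‖ * 1 := by
        rw [sph_norm]
        have := h1
        nlinarith [abs_nonneg (inner ℝ (z.1.1 - z.1.2) ((z.2:Sph):E3) : ℝ)]
  _ ≤ 2 * (‖z.1.1‖ + ‖z.1.2‖) := by
        have := norm_sub_le z.1.1 z.1.2
        have h2 := norm_nonneg z.1.1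
        have h3 := norm_nonneg z.1.2
        nlinarith

lemma vsPost_bound (z : Q) :
    ‖vsPost z.1.1 z.1.2 (z.2 : E3)‖ ≤ 2 * (‖z.1.1‖ + ‖z.1.2‖) := by
  unfold vsPost
  have h1 : |(inner ℝ (z.1.1 - z.1.2) ((z.2:Sph) : E3) : ℝ)| ≤ ‖z.1.1 - z.1.2‖ := by
    calc |(inner ℝ (z.1.1 - z.1.2) ((z.2:Sph) : E3) : ℝ)|
        ≤ ‖z.1.1 - z.1.2‖ * ‖((z.2:Sph) : E3)‖ := abs_real_inner_le_norm _ _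
    _ = ‖z.1.1 - z.1.2‖ := by rw [sph_norm]; ring
  calc ‖z.1.2 + (inner ℝ (z.1.1 - z.1.2) ((z.2:Sph):E3) : ℝ) • ((z.2:Sph):E3)‖
      ≤ ‖z.1.2‖ + ‖(inner ℝ (z.1.1 - z.1.2) ((z.2:Sph):E3) : ℝ) • ((z.2:Sph):E3)‖ :=
        norm_add_le _ _
  _ = ‖z.1.2‖ + |(inner ℝ (z.1.1 - z.1.2) ((z.2:Sph):E3) : ℝ)| * ‖((z.2:Sph):E3)‖ := by
        rw [norm_smul, Real.norm_eq_abs]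
  _ ≤ ‖z.1.2‖ + ‖z.1.1 - z.1.2‖ * 1 := by
        rw [sph_norm]
        nlinarith [abs_nonneg (inner ℝ (z.1.1 - z.1.2) ((z.2:Sph):E3) : ℝ)]
  _ ≤ 2 * (‖z.1.1‖ + ‖z.1.2‖) := by
        have := norm_sub_le z.1.1 z.1.2
        have h2 := norm_nonneg z.1.1
        have h3 := norm_nonneg z.1.2
        nlinarith


end Boltz

open Boltz in
/-- Symmetrized weak formulation of the Boltzmann collision operator:
`∫ B(φ) ψ dv = (1/2) ∫∫∫ (ψ(v') + ψ(v'*) − ψ(v) − ψ(v*)) φ(v)φ(v*) ((v−v*)·ω)₊ dv dv* dω`. -/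
theorem weak_formulation_symmetrized (φ ψ : E3 → ℝ)
    (hφ : RapidDecay φ) (hψ : PolyGrowth ψ) :
    ∫ v : E3, Bop φ v * ψ v
      = (1 / 2) * ∫ v : E3, ∫ vs : E3, ∫ ω : Sph,
          (ψ (vPost v vs ω) + ψ (vsPost v vs ω) - ψ v - ψ vs) * (φ v * φ vs)
            * max (inner ℝ (v - vs) (ω : E3) : ℝ) 0 ∂sphMeasure := by
  obtain ⟨hψc, C, k, hCk⟩ := hψ
  have intC1 : Integrable (C1f φ ψ) nu :=
    integrable_master hφ hψc hCk (fun z => vPost z.1.1 z.1.2 z.2)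
      continuous_vPostQ vPost_bound
  have intC2 : Integrable (C2f φ ψ) nu :=
    integrable_master hφ hψc hCk (fun z => vsPost z.1.1 z.1.2 z.2)
      continuous_vsPostQ vsPost_bound
  have intC3 : Integrable (C3f φ ψ) nu :=
    integrable_master hφ hψc hCk (fun z => z.1.1) (continuous_fst.fst) (fun z => by
      nlinarith [norm_nonneg z.1.1, norm_nonneg z.1.2])
  have intC4 : Integrable (C4f φ ψ) nu :=
    integrable_master hφ hψc hCk (fun z => z.1.2) (continuous_fst.snd) (fun z => by
      nlinarith [norm_nonneg z.1.1, norm_nonneg z.1.2])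
  have intAA : Integrable (AAf φ ψ) nu := by
    rw [← compT φ ψ]
    exact (mpT.integrable_comp_emb Temb).2 intC2
  -- integral identities via measure-preserving maps
  have hgain : ∫ z, AAf φ ψ z ∂nu = ∫ z, C2f φ ψ z ∂nu := by
    rw [← compT φ ψ]
    exact mpT.integral_comp Temb (C2f φ ψ)
  have h12 : ∫ z, C1f φ ψ z ∂nu = ∫ z, C2f φ ψ z ∂nu := by
    rw [← compS12 φ ψ]
    exact mpS.integral_comp Semb (C2f φ ψ)
  have h34 : ∫ z, C4f φ ψ z ∂nu = ∫ z, C3f φ ψ z ∂nu := by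
    rw [← compS34 φ ψ]
    exact mpS.integral_comp Semb (C3f φ ψ)
  -- LHS
  have hBop : (∫ v : E3, Bop φ v * ψ v)
      = ∫ v : E3, ∫ vs : E3, ∫ ω : Sph,
          ((φ (vPost v vs ω) * φ (vsPost v vs ω) - φ v * φ vs)
            * max (inner ℝ (v - vs) (ω : E3) : ℝ) 0) * ψ v ∂sphMeasure := by
    refine integral_congr_ae (Filter.Eventually.of_forall fun v => ?_)
    beta_reduce
    unfold Bop
    rw [← integral_mul_const]
    refine integral_congr_ae (Filter.Eventually.of_forall fun vs => ?_)
    beta_reduce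
    rw [← integral_mul_const]
  have hLHSint : Integrable (fun z : Q =>
      ((φ (vPost z.1.1 z.1.2 z.2) * φ (vsPost z.1.1 z.1.2 z.2) - φ z.1.1 * φ z.1.2)
        * max (inner ℝ (z.1.1 - z.1.2) ((z.2 : Sph) : E3) : ℝ) 0) * ψ z.1.1) nu := by
    refine (intAA.sub intC3).congr (Filter.Eventually.of_forall fun z => ?_)
    simp only [Pi.sub_apply, AAf, C3f, Kk]
    ring
  have hL := iterToProd (fun v vs ω =>
      ((φ (vPost v vs ω) * φ (vsPost v vs ω) - φ v * φ vs)
        * max (inner ℝ (v - vs) (ω : E3) : ℝ) 0) * ψ v) hLHSint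
  have keyL : (∫ z : Q, ((φ (vPost z.1.1 z.1.2 z.2) * φ (vsPost z.1.1 z.1.2 z.2)
        - φ z.1.1 * φ z.1.2)
        * max (inner ℝ (z.1.1 - z.1.2) ((z.2 : Sph) : E3) : ℝ) 0) * ψ z.1.1 ∂nu)
      = ∫ z : Q, (AAf φ ψ z - C3f φ ψ z) ∂nu := by
    refine integral_congr_ae (Filter.Eventually.of_forall fun z => ?_)
    simp only [AAf, C3f, Kk]
    ring
  have EL : (∫ v : E3, Bop φ v * ψ v)
      = (∫ z, C2f φ ψ z ∂nu) - ∫ z, C3f φ ψ z ∂nu := by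
    rw [hBop]
    exact hL.trans (keyL.trans ((integral_sub intAA intC3).trans (by rw [hgain])))
  -- RHS
  have hRHSint : Integrable (fun z : Q =>
      (ψ (vPost z.1.1 z.1.2 z.2) + ψ (vsPost z.1.1 z.1.2 z.2) - ψ z.1.1 - ψ z.1.2)
        * (φ z.1.1 * φ z.1.2)
        * max (inner ℝ (z.1.1 - z.1.2) ((z.2 : Sph) : E3) : ℝ) 0) nu := by
    refine (((intC1.add intC2).sub intC3).sub intC4).congr
      (Filter.Eventually.of_forall fun z => ?_)
    simp only [Pi.sub_apply, Pi.add_apply, C1f, C2f, C3f, C4f, Kk]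
    ring
  have hR := iterToProd (fun v vs ω =>
      (ψ (vPost v vs ω) + ψ (vsPost v vs ω) - ψ v - ψ vs) * (φ v * φ vs)
        * max (inner ℝ (v - vs) (ω : E3) : ℝ) 0) hRHSint
  have keyR : (∫ z : Q,
        (ψ (vPost z.1.1 z.1.2 z.2) + ψ (vsPost z.1.1 z.1.2 z.2) - ψ z.1.1 - ψ z.1.2)
          * (φ z.1.1 * φ z.1.2)
          * max (inner ℝ (z.1.1 - z.1.2) ((z.2 : Sph) : E3) : ℝ) 0 ∂nu)
      = ∫ z : Q, (C1f φ ψ z + C2f φ ψ z - C3f φ ψ z - C4f φ ψ z) ∂nu := by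
    refine integral_congr_ae (Filter.Eventually.of_forall fun z => ?_)
    simp only [C1f, C2f, C3f, C4f, Kk]
    ring
  have splitR : (∫ z : Q, (C1f φ ψ z + C2f φ ψ z - C3f φ ψ z - C4f φ ψ z) ∂nu)
      = (∫ z, C1f φ ψ z ∂nu) + (∫ z, C2f φ ψ z ∂nu) - (∫ z, C3f φ ψ z ∂nu)
        - ∫ z, C4f φ ψ z ∂nu := by
    have i12 : Integrable (fun z : Q => C1f φ ψ z + C2f φ ψ z) nu := intC1.add intC2
    have i123 : Integrable (fun z : Q => C1f φ ψ z + C2f φ ψ z - C3f φ ψ z) nu := i12.sub intC3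
    calc (∫ z : Q, (C1f φ ψ z + C2f φ ψ z - C3f φ ψ z - C4f φ ψ z) ∂nu)
        = (∫ z : Q, (C1f φ ψ z + C2f φ ψ z - C3f φ ψ z) ∂nu)
            - ∫ z : Q, C4f φ ψ z ∂nu := integral_sub i123 intC4
    _ = ((∫ z : Q, (C1f φ ψ z + C2f φ ψ z) ∂nu) - ∫ z : Q, C3f φ ψ z ∂nu)
            - ∫ z : Q, C4f φ ψ z ∂nu :=
        congrArg (fun t => t - ∫ z : Q, C4f φ ψ z ∂nu) (integral_sub i12 intC3)
    _ = ((∫ z : Q, C1f φ ψ z ∂nu) + (∫ z : Q, C2f φ ψ z ∂nu) - ∫ z : Q, C3f φ ψ z ∂nu)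
            - ∫ z : Q, C4f φ ψ z ∂nu := by
        have h := integral_add intC1 intC2
        exact congrArg (fun t => t - (∫ z : Q, C3f φ ψ z ∂nu) - ∫ z : Q, C4f φ ψ z ∂nu) h
  have ER : (∫ v : E3, ∫ vs : E3, ∫ ω : Sph,
        (ψ (vPost v vs ω) + ψ (vsPost v vs ω) - ψ v - ψ vs) * (φ v * φ vs)
          * max (inner ℝ (v - vs) (ω : E3) : ℝ) 0 ∂sphMeasure)
      = 2 * ((∫ z, C2f φ ψ z ∂nu) - ∫ z, C3f φ ψ z ∂nu) :=
    hR.trans (keyR.trans (splitR.trans (by rw [h12, h34]; ring)))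
  rw [EL, ER]
  ring
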